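/- For d ∈ {2,…,N−1}, the group of linear isometries of ℝ^N preserving the polygonal sphere S^{N−1,d−1}_ℝ is exactly the hyperoctahedral group H_N of signed permutation matrices. -/

import Mathlib

open Finset

namespace PolySphere

variable {N d : ℕ}

/-- The support of a vector as a finset. -/
noncomputable def supp (x : EuclideanSpace ℝ (Fin N)) : Finset (Fin N) :=
  Finset.univ.filter (fun i => x i ≠ 0)

lemma mem_supp {x : EuclideanSpace ℝ (Fin N)} {i : Fin N} : i ∈ supp x ↔ x i ≠ 0 := by
  simp [supp]

lemma supp_smul {c : ℝ} (hc : c ≠ 0) (x : EuclideanSpace ℝ (Fin N)) :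
    supp (c • x) = supp x := by
  ext i
  simp [mem_supp, hc, PiLp.smul_apply, smul_eq_mul, mul_eq_zero]

lemma sum_sq_eq (x : EuclideanSpace ℝ (Fin N)) : (∑ i, x i ^ 2) = ‖x‖ ^ 2 := by
  rw [EuclideanSpace.norm_eq, Real.sq_sqrt (by positivity)]
  simp [Real.norm_eq_abs, sq_abs]

lemma prod_cond_iff (x : EuclideanSpace ℝ (Fin N)) :
    (∀ f : Fin (d + 1) → Fin N, Function.Injective f → (∏ r, x (f r)) = 0) ↔
    (supp x).card ≤ d := by
  constructor
  · intro h
    by_contra hc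
    push_neg at hc
    obtain ⟨s, hs, hcard⟩ := Finset.exists_subset_card_eq hc
    set f : Fin (d+1) → Fin N := fun r => s.orderIsoOfFin hcard r with hf
    have hinj : Function.Injective f := fun a b hab => by
      simpa using (s.orderIsoOfFin hcard).injective (Subtype.ext hab)
    have := h f hinj
    refine absurd this (Finset.prod_ne_zero_iff.2 ?_)
    intro r _
    have : f r ∈ s := (s.orderIsoOfFin hcard r).2
    exact mem_supp.1 (hs this)
  · intro h f hinj
    have : ¬ (∀ r, f r ∈ supp x) := by
      intro hall
      have : (Finset.univ.image f).card ≤ (supp x).card :=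
        Finset.card_le_card (fun j hj => by
          obtain ⟨r, _, rfl⟩ := Finset.mem_image.1 hj; exact hall r)
      rw [Finset.card_image_of_injective _ hinj, Finset.card_univ, Fintype.card_fin] at this
      omega
    push_neg at this
    obtain ⟨r, hr⟩ := this
    exact Finset.prod_eq_zero (Finset.mem_univ r) (by simpa [mem_supp] using hr)

/-- Generic linear combinations achieve the full union of supports. -/
lemma exists_full_supp (u : Fin N → EuclideanSpace ℝ (Fin N)) (I : Finset (Fin N)) :
    ∃ c : Fin N → ℝ, supp (∑ i ∈ I, c i • u i) = I.biUnion (fun i => supp (u i)) := by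
  classical
  induction I using Finset.induction_on with
  | empty => exact ⟨0, by simp [supp]⟩
  | @insert j I hjI ih =>
    obtain ⟨c, hc⟩ := ih
    set x := ∑ i ∈ I, c i • u i with hx
    set F : Finset ℝ := insert 0 (Finset.univ.image (fun a => -(x a) / (u j a))) with hF
    obtain ⟨t, ht⟩ := Infinite.exists_notMem_finset F
    have ht0 : t ≠ 0 := fun h => ht (by simp [hF, h])
    have htbad : ∀ a : Fin N, t ≠ -(x a) / (u j a) := by
      intro a h
      apply ht
      simp only [hF, Finset.mem_insert]
      exact Or.inr (Finset.mem_image.2 ⟨a, Finset.mem_univ a, h.symm⟩)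
    refine ⟨Function.update c j t, ?_⟩
    have hsum : ∑ i ∈ insert j I, (Function.update c j t) i • u i = t • u j + x := by
      rw [Finset.sum_insert hjI, Function.update_self]
      congr 1
      apply Finset.sum_congr rfl
      intro i hi
      have hij : i ≠ j := fun h => hjI (h ▸ hi)
      rw [Function.update_of_ne hij]
    rw [hsum, Finset.biUnion_insert, ← hc]
    ext a
    simp only [mem_supp, Finset.mem_union, PiLp.add_apply, PiLp.smul_apply, smul_eq_mul]
    constructor
    · intro h
      by_contra hcon
      push_neg at hcon
      obtain ⟨h1, h2⟩ := hcon
      rw [h1, h2] at h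
      simp at h
    · intro h
      rcases h with h | h
      · have hu : u j a ≠ 0 := h
        by_cases hxa : x a = 0
        · rw [hxa, add_zero]
          exact mul_ne_zero ht0 hu
        · intro heq
          apply htbad a
          field_simp
          linarith [heq]
      · have hxa : x a ≠ 0 := h
        by_cases hu : u j a = 0
        · rw [hu, mul_zero, zero_add]; exact hxa
        · intro heq
          apply htbad a
          field_simp
          linarith [heq]

lemma greedy (g : Fin N → Finset (Fin N)) (hd : 1 ≤ d) (hN : d + 1 ≤ N)
    (hcard : ∀ I : Finset (Fin N), I.card ≤ d → (I.biUnion g).card ≤ d)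
    (hcover : ∀ a : Fin N, ∃ j, a ∈ g j)
    (i₀ : Fin N) (hbig : 2 ≤ (g i₀).card) : False := by
  classical
  have key : ∀ k, 1 ≤ k → k ≤ d →
      ∃ I : Finset (Fin N), I.card = k ∧ k + 1 ≤ (I.biUnion g).card := by
    intro k hk
    induction k, hk using Nat.le_induction with
    | base =>
      intro _
      exact ⟨{i₀}, by simp, by simpa using hbig⟩
    | succ k hk ih =>
      intro hkd
      obtain ⟨I, hIcard, hJ⟩ := ih (by omega)
      have hJd : (I.biUnion g).card ≤ d := hcard I (by omega)
      obtain ⟨a, ha⟩ : ∃ a, a ∉ I.biUnion g := by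
        by_contra hcon
        push_neg at hcon
        have h := Finset.eq_univ_iff_forall.2 hcon
        rw [h, Finset.card_univ, Fintype.card_fin] at hJd
        omega
      obtain ⟨j, hj⟩ := hcover a
      have hjI : j ∉ I := fun h => ha (Finset.mem_biUnion.2 ⟨j, h, hj⟩)
      refine ⟨insert j I, by rw [Finset.card_insert_of_notMem hjI, hIcard], ?_⟩
      have hsub : insert a (I.biUnion g) ⊆ (insert j I).biUnion g := by
        intro b hb
        rcases Finset.mem_insert.1 hb with rfl | hb
        · exact Finset.mem_biUnion.2 ⟨j, Finset.mem_insert_self _ _, hj⟩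
        · obtain ⟨i, hi, hbi⟩ := Finset.mem_biUnion.1 hb
          exact Finset.mem_biUnion.2 ⟨i, Finset.mem_insert_of_mem hi, hbi⟩
      calc k + 1 + 1 ≤ (I.biUnion g).card + 1 := by omega
        _ = (insert a (I.biUnion g)).card := (Finset.card_insert_of_notMem ha).symm
        _ ≤ _ := Finset.card_le_card hsub
  obtain ⟨I, hIcard, hJ⟩ := key d hd le_rfl
  have := hcard I (le_of_eq hIcard)
  omega

lemma apply_sum {ι : Type*} (I : Finset ι) (v : ι → EuclideanSpace ℝ (Fin N)) (a : Fin N) :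
    (∑ i ∈ I, v i) a = ∑ i ∈ I, v i a := by
  classical
  induction I using Finset.induction_on with
  | empty => simp
  | @insert j I hjI ih => rw [Finset.sum_insert hjI, Finset.sum_insert hjI, PiLp.add_apply, ih]

lemma eq_sum_single (x : EuclideanSpace ℝ (Fin N)) :
    x = ∑ i, x i • EuclideanSpace.single i (1 : ℝ) := by
  ext a
  rw [apply_sum]
  rw [Finset.sum_eq_single a]
  · simp [EuclideanSpace.single_apply]
  · intro b _ hb
    simp [EuclideanSpace.single_apply, hb, Ne.symm hb]
  · intro h
    exact absurd (Finset.mem_univ a) h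

end PolySphere

open PolySphere

/-- For `2 ≤ d ≤ N-1`, the linear isometries of `ℝ^N` preserving the polygonal
sphere `S^{N-1,d-1}_ℝ` (unit vectors with at most `d` nonzero coordinates) are
exactly the signed permutation matrices, i.e. the hyperoctahedral group `H_N`. -/
theorem isometry_group_of_polygonal_sphere (N d : ℕ) (h2 : 2 ≤ d) (hdN : d + 1 ≤ N)
    (U : EuclideanSpace ℝ (Fin N) ≃ₗᵢ[ℝ] EuclideanSpace ℝ (Fin N)) :
    (⇑U '' {x : EuclideanSpace ℝ (Fin N) | (∑ i, x i ^ 2) = 1 ∧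
        ∀ f : Fin (d + 1) → Fin N, Function.Injective f → (∏ r, x (f r)) = 0} =
      {x : EuclideanSpace ℝ (Fin N) | (∑ i, x i ^ 2) = 1 ∧
        ∀ f : Fin (d + 1) → Fin N, Function.Injective f → (∏ r, x (f r)) = 0}) ↔
    ∃ (π : Equiv.Perm (Fin N)) (ε : Fin N → ℝ),
      (∀ i, ε i = 1 ∨ ε i = -1) ∧
      ∀ (x : EuclideanSpace ℝ (Fin N)) (i : Fin N), U x i = ε i * x (π i) := by
  classical
  set S : Set (EuclideanSpace ℝ (Fin N)) :=
    {x : EuclideanSpace ℝ (Fin N) | (∑ i, x i ^ 2) = 1 ∧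
      ∀ f : Fin (d + 1) → Fin N, Function.Injective f → (∏ r, x (f r)) = 0} with hS
  have hmem : ∀ x : EuclideanSpace ℝ (Fin N),
      x ∈ S ↔ ((∑ i, x i ^ 2) = 1 ∧ (supp x).card ≤ d) := by
    intro x
    rw [hS, Set.mem_setOf_eq, prod_cond_iff]
  constructor
  · -- forward direction
    intro hU
    have hsub : ∀ x ∈ S, U x ∈ S := fun x hx => hU ▸ ⟨x, hx, rfl⟩
    -- U preserves the cone of vectors with at most d nonzero coordinates
    have hcone : ∀ x : EuclideanSpace ℝ (Fin N),
        (supp x).card ≤ d → (supp (U x)).card ≤ d := by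
      intro x hx
      by_cases h0 : x = 0
      · subst h0
        rw [map_zero]
        simp [supp]
      · have hn : ‖x‖ ≠ 0 := norm_ne_zero_iff.2 h0
        set y : EuclideanSpace ℝ (Fin N) := ‖x‖⁻¹ • x with hy
        have hyS : y ∈ S := by
          rw [hmem]
          constructor
          · rw [sum_sq_eq, hy, norm_smul, norm_inv, norm_norm,
              inv_mul_cancel₀ hn, one_pow]
          · rw [hy, supp_smul (inv_ne_zero hn)]
            exact hx
        have hUy : (supp (U y)).card ≤ d := ((hmem _).1 (hsub y hyS)).2
        have hUx : U x = ‖x‖ • U y := by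
          rw [← map_smul, hy, smul_smul, mul_inv_cancel₀ hn, one_smul]
        rw [hUx, supp_smul hn]
        exact hUy
    set u : Fin N → EuclideanSpace ℝ (Fin N) :=
      fun i => U (EuclideanSpace.single i (1 : ℝ)) with hu
    have hUdecomp : ∀ x : EuclideanSpace ℝ (Fin N), U x = ∑ i, x i • u i := by
      intro x
      conv_lhs => rw [eq_sum_single x]
      rw [map_sum]
      simp [hu]
    -- the union-of-supports bound
    have hbi : ∀ I : Finset (Fin N), I.card ≤ d →
        (I.biUnion (fun i => supp (u i))).card ≤ d := by
      intro I hI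
      obtain ⟨c, hc⟩ := exists_full_supp u I
      rw [← hc]
      have h1 : (∑ i ∈ I, c i • u i) = U (∑ i ∈ I, c i • EuclideanSpace.single i (1:ℝ)) := by
        rw [map_sum]
        simp [hu]
      rw [h1]
      apply hcone
      have hsub2 : supp (∑ i ∈ I, c i • EuclideanSpace.single i (1:ℝ)) ⊆ I := by
        intro a ha
        by_contra haI
        apply mem_supp.1 ha
        rw [apply_sum]
        apply Finset.sum_eq_zero
        intro i hi
        have : a ≠ i := fun h => haI (h ▸ hi)
        simp [EuclideanSpace.single_apply, this]
      exact le_trans (Finset.card_le_card hsub2) hI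
    -- covering property from surjectivity
    have hcover : ∀ a : Fin N, ∃ j : Fin N, a ∈ supp (u j) := by
      intro a
      by_contra h
      push_neg at h
      have hz : ∀ j, u j a = 0 := fun j => not_not.1 (fun hh => h j (mem_supp.2 hh))
      have heq : EuclideanSpace.single a (1:ℝ) =
          U (U.symm (EuclideanSpace.single a (1:ℝ))) := (U.apply_symm_apply _).symm
      rw [hUdecomp] at heq
      have := congrArg (fun z : EuclideanSpace ℝ (Fin N) => z a) heq
      simp only [apply_sum, PiLp.smul_apply, smul_eq_mul] at this
      rw [EuclideanSpace.single_apply] at this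
      simp only [if_pos rfl] at this
      rw [Finset.sum_eq_zero (fun j _ => by rw [hz j, mul_zero])] at this
      exact one_ne_zero this
    -- each u i has singleton support
    have hone : ∀ i : Fin N, ∃ p : Fin N, supp (u i) = {p} := by
      intro i
      have hne : (supp (u i)).Nonempty := by
        by_contra hcon
        rw [Finset.not_nonempty_iff_eq_empty] at hcon
        have huz : u i = 0 := by
          ext a
          have : a ∉ supp (u i) := by rw [hcon]; exact Finset.notMem_empty a
          simpa [mem_supp, not_not] using this
        have : ‖u i‖ = 1 := by
          rw [hu, U.norm_map, EuclideanSpace.norm_single, norm_one]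
        rw [huz, norm_zero] at this
        exact zero_ne_one this
      have hle : (supp (u i)).card ≤ 1 := by
        by_contra hcon
        push_neg at hcon
        exact greedy (fun i => supp (u i)) (by omega) hdN hbi hcover i hcon
      rw [← Finset.card_eq_one]
      have hpos : 0 < (supp (u i)).card := Finset.card_pos.2 hne
      omega
    choose p hp using hone
    have hpsupp : ∀ i, p i ∈ supp (u i) := fun i => (hp i).symm ▸ Finset.mem_singleton_self _
    set ε' : Fin N → ℝ := fun i => u i (p i) with hε'
    have hε'ne : ∀ i, ε' i ≠ 0 := fun i => (mem_supp (x := u i) (i := p i)).1 (hpsupp i)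
    have hui : ∀ i a, u i a = if a = p i then ε' i else 0 := by
      intro i a
      by_cases h : a = p i
      · subst h; rw [if_pos rfl]
      · rw [if_neg h]
        have : a ∉ supp (u i) := by rw [hp i]; simpa using h
        simpa [mem_supp, not_not] using this
    have hsigns : ∀ i, ε' i = 1 ∨ ε' i = -1 := by
      intro i
      have hnorm : ‖u i‖ = 1 := by
        rw [hu, U.norm_map, EuclideanSpace.norm_single, norm_one]
      have hsq : (ε' i) ^ 2 = 1 := by
        have h2 := sum_sq_eq (u i)
        rw [hnorm, one_pow] at h2
        rw [← h2]
        rw [Finset.sum_eq_single (p i)]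
        · intro b _ hb
          rw [hui i b, if_neg hb]
          ring
        · intro h; exact absurd (Finset.mem_univ _) h
      have : (ε' i - 1) * (ε' i + 1) = 0 := by nlinarith [hsq]
      rcases mul_eq_zero.1 this with h | h
      · left; linarith
      · right; linarith
    have hpinj : Function.Injective p := by
      intro i j hij
      by_contra hne
      have h1 : (inner ℝ (u i) (u j) : ℝ) = 0 := by
        rw [hu, LinearIsometryEquiv.inner_map_map, EuclideanSpace.inner_single_left]
        simp [EuclideanSpace.single_apply, hne]
      have h2 : (inner ℝ (u i) (u j) : ℝ) = ε' i * ε' j := by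
        rw [PiLp.inner_apply]
        rw [Finset.sum_eq_single (p i)]
        · simp only [RCLike.inner_apply, conj_trivial]
          rw [hui i (p i), hui j (p i), if_pos rfl, if_pos hij, mul_comm]
        · intro b _ hb
          simp only [RCLike.inner_apply, conj_trivial]
          rw [hui i b, if_neg hb]
          ring
        · intro h; exact absurd (Finset.mem_univ _) h
      rw [h1] at h2
      exact (mul_ne_zero (hε'ne i) (hε'ne j)) h2.symm
    have hpbij : Function.Bijective p := Finite.injective_iff_bijective.1 hpinj
    set π : Equiv.Perm (Fin N) := Equiv.ofBijective p hpbij with hπ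
    refine ⟨π.symm, fun i => ε' (π.symm i), fun i => hsigns _, ?_⟩
    intro x i
    rw [hUdecomp x, apply_sum]
    rw [Finset.sum_eq_single (π.symm i)]
    · rw [PiLp.smul_apply, smul_eq_mul, hui]
      have : p (π.symm i) = i := π.apply_symm_apply i
      rw [if_pos this.symm, mul_comm]
    · intro b _ hb
      rw [PiLp.smul_apply, smul_eq_mul, hui]
      have : i ≠ p b := by
        intro h
        apply hb
        have : π b = i := h.symm
        rw [← this, Equiv.symm_apply_apply]
      rw [if_neg this, mul_zero]
    · intro h; exact absurd (Finset.mem_univ _) h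
  · -- backward direction
    rintro ⟨π, ε, hε, hUx⟩
    have hεne : ∀ i, ε i ≠ 0 := by
      intro i
      rcases hε i with h | h <;> rw [h] <;> norm_num
    have hiff : ∀ x : EuclideanSpace ℝ (Fin N), U x ∈ S ↔ x ∈ S := by
      intro x
      rw [hmem, hmem]
      have hsum : (∑ i, (U x) i ^ 2) = ∑ i, x i ^ 2 := by
        calc (∑ i, (U x) i ^ 2) = ∑ i, x (π i) ^ 2 := by
              apply Finset.sum_congr rfl
              intro i _
              rw [hUx x i, mul_pow]
              rcases hε i with h | h <;> rw [h] <;> ring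
          _ = ∑ i, x i ^ 2 := Equiv.sum_comp π (fun i => x i ^ 2)
      have hsupp : (supp (U x)).card = (supp x).card := by
        have hset : supp (U x) = (supp x).map π.symm.toEmbedding := by
          ext b
          simp only [mem_supp, Finset.mem_map, Equiv.coe_toEmbedding]
          constructor
          · intro h
            refine ⟨π b, ?_, π.symm_apply_apply b⟩
            intro h0
            apply h
            rw [hUx x b, h0, mul_zero]
          · rintro ⟨a, ha, rfl⟩
            rw [hUx]
            rw [π.apply_symm_apply]
            exact mul_ne_zero (hεne _) ha
        rw [hset, Finset.card_map]
      rw [hsum, hsupp]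
    ext y
    constructor
    · rintro ⟨x, hx, rfl⟩
      exact (hiff x).2 hx
    · intro hy
      exact ⟨U.symm y, (hiff _).1 (by rwa [U.apply_symm_apply]), U.apply_symm_apply y⟩
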